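/- Let Δ ∈ ℝ with cos Δ ≠ 1. Then for every α ∈ ℂ, |⟪c(α), c(cos Δ · α)⟫|² · |⟪c(0), c(i · sin Δ · α)⟫|² = exp(−2|α|²(1 − cos Δ)), and this quantity tends to 0 as |α| → ∞. -/

import Mathlib

/-- The coherent state vector `c(α) ∈ ℓ²(ℕ, ℂ)`, whose `n`-th Fock-basis
coefficient is `exp(−|α|²/2) · αⁿ / √(n!)`. -/
noncomputable def coherent (α : ℂ) : lp (fun _ : ℕ => ℂ) 2 :=
  ⟨fun n => Complex.exp (-(((‖α‖) ^ 2 : ℝ) : ℂ) / 2) * α ^ n /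
      (Real.sqrt (Nat.factorial n) : ℂ), by
    apply memℓp_gen
    have hs : Summable (fun n : ℕ =>
        (Real.exp (-(‖α‖) ^ 2 / 2)) ^ 2 * ((‖α‖ ^ 2) ^ n / (Nat.factorial n))) := by
      exact (Real.summable_pow_div_factorial _).mul_left _
    apply hs.congr
    intro n
    have hfac : (0 : ℝ) < Real.sqrt (Nat.factorial n) := by positivity
    have h2 : (2 : ENNReal).toReal = ((2 : ℕ) : ℝ) := by norm_num
    rw [h2, Real.rpow_natCast]
    simp only [norm_div, norm_mul]
    rw [Complex.norm_exp]
    have hre : (-(((‖α‖) ^ 2 : ℝ) : ℂ) / 2).re = -(‖α‖) ^ 2 / 2 := by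
      simp [← Complex.ofReal_pow]
    rw [hre, norm_pow, Complex.norm_real, Real.norm_eq_abs, abs_of_pos hfac, eq_comm, div_pow, mul_pow,
      Real.sq_sqrt (Nat.cast_nonneg _)]
    ring⟩

lemma inner_coherent (α β : ℂ) :
    (inner ℂ (coherent α) (coherent β) : ℂ) =
      Complex.exp (-(((‖α‖) ^ 2 : ℝ) : ℂ) / 2 - (((‖β‖) ^ 2 : ℝ) : ℂ) / 2
        + (starRingEnd ℂ) α * β) := by
  rw [lp.inner_eq_tsum]
  have hterm : ∀ n : ℕ, (inner ℂ (coherent α n) (coherent β n) : ℂ) =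
      (Complex.exp (-(((‖α‖) ^ 2 : ℝ) : ℂ) / 2) *
        Complex.exp (-(((‖β‖) ^ 2 : ℝ) : ℂ) / 2)) *
        (((starRingEnd ℂ) α * β) ^ n / (Nat.factorial n : ℂ)) := by
    intro n
    have hsq : ((Real.sqrt (Nat.factorial n) : ℂ)) * (Real.sqrt (Nat.factorial n) : ℂ)
        = (Nat.factorial n : ℂ) := by
      rw [← Complex.ofReal_mul, Real.mul_self_sqrt (Nat.cast_nonneg _)]
      norm_num
    have hne : ((Real.sqrt (Nat.factorial n) : ℂ)) ≠ 0 := by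
      simp [Real.sqrt_eq_zero', Nat.factorial_pos n, Nat.factorial_pos n |>.le]
      positivity
    rw [RCLike.inner_apply']
    show (starRingEnd ℂ) (Complex.exp (-(((‖α‖) ^ 2 : ℝ) : ℂ) / 2) * α ^ n /
        (Real.sqrt (Nat.factorial n) : ℂ)) *
      (Complex.exp (-(((‖β‖) ^ 2 : ℝ) : ℂ) / 2) * β ^ n /
        (Real.sqrt (Nat.factorial n) : ℂ)) = _
    rw [map_div₀, map_mul, ← Complex.exp_conj, map_pow]
    have hc : (starRingEnd ℂ) (-(((‖α‖) ^ 2 : ℝ) : ℂ) / 2) =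
        -(((‖α‖) ^ 2 : ℝ) : ℂ) / 2 := by
      rw [map_div₀, map_neg, Complex.conj_ofReal, map_ofNat]
    have hcs : (starRingEnd ℂ) ((Real.sqrt (Nat.factorial n) : ℂ)) =
        (Real.sqrt (Nat.factorial n) : ℂ) := Complex.conj_ofReal _
    rw [hc, hcs, div_mul_div_comm, hsq, mul_pow]
    ring
  calc ∑' n, (inner ℂ (coherent α n) (coherent β n) : ℂ)
      = ∑' n, (Complex.exp (-(((‖α‖) ^ 2 : ℝ) : ℂ) / 2) *
          Complex.exp (-(((‖β‖) ^ 2 : ℝ) : ℂ) / 2)) *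
          (((starRingEnd ℂ) α * β) ^ n / (Nat.factorial n : ℂ)) := by
        exact tsum_congr hterm
    _ = (Complex.exp (-(((‖α‖) ^ 2 : ℝ) : ℂ) / 2) *
          Complex.exp (-(((‖β‖) ^ 2 : ℝ) : ℂ) / 2)) *
          ∑' n, ((starRingEnd ℂ) α * β) ^ n / (Nat.factorial n : ℂ) := tsum_mul_left
    _ = _ := by
        have hexp : ∀ z : ℂ, ∑' n : ℕ, z ^ n / (Nat.factorial n : ℂ) = Complex.exp z := by
          intro z
          rw [Complex.exp_eq_exp_ℂ, NormedSpace.exp_eq_tsum_div]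
        rw [hexp, ← Complex.exp_add, ← Complex.exp_add]
        ring_nf

lemma abs_sq_inner_coherent (α β : ℂ) :
    (‖(inner ℂ (coherent α) (coherent β) : ℂ)‖) ^ 2 =
      Real.exp (-(‖α‖) ^ 2 - (‖β‖) ^ 2 + 2 * ((starRingEnd ℂ) α * β).re) := by
  rw [inner_coherent, Complex.norm_exp, ← Real.exp_nat_mul]
  congr 1
  simp [Complex.add_re, Complex.sub_re, ← Complex.ofReal_pow]
  ring

/-- The fidelity between the outputs of an ideal and a mis-calibrated beamsplitter
on the input `|α⟩ ⊗ |0⟩` equals `exp(−2|α|²(1 − cos Δ))`, which tends to `0` as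
`|α| → ∞` whenever `cos Δ ≠ 1`. -/
theorem miscalibrated_beamsplitter_fidelity (Δ : ℝ) (hΔ : Real.cos Δ ≠ 1) :
    (∀ α : ℂ,
      (‖(inner ℂ (coherent α) (coherent ((Real.cos Δ : ℂ) * α)) : ℂ)‖) ^ 2 *
        (‖(inner ℂ (coherent 0) (coherent (Complex.I * (Real.sin Δ : ℂ) * α)) : ℂ)‖) ^ 2 =
        Real.exp (-2 * (‖α‖) ^ 2 * (1 - Real.cos Δ))) ∧
    Filter.Tendsto
      (fun α : ℂ =>
        (‖(inner ℂ (coherent α) (coherent ((Real.cos Δ : ℂ) * α)) : ℂ)‖) ^ 2 *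
          (‖(inner ℂ (coherent 0) (coherent (Complex.I * (Real.sin Δ : ℂ) * α)) : ℂ)‖) ^ 2)
      (Filter.comap (fun z : ℂ => ‖z‖) Filter.atTop) (nhds 0) := by
  have heq : ∀ α : ℂ,
      (‖(inner ℂ (coherent α) (coherent ((Real.cos Δ : ℂ) * α)) : ℂ)‖) ^ 2 *
        (‖(inner ℂ (coherent 0) (coherent (Complex.I * (Real.sin Δ : ℂ) * α)) : ℂ)‖) ^ 2 =
        Real.exp (-2 * (‖α‖) ^ 2 * (1 - Real.cos Δ)) := by
    intro α
    rw [abs_sq_inner_coherent, abs_sq_inner_coherent, ← Real.exp_add]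
    congr 1
    have h1 : ‖(Real.cos Δ : ℂ) * α‖ = |Real.cos Δ| * ‖α‖ := by
      rw [norm_mul, Complex.norm_real, Real.norm_eq_abs]
    have h2 : ‖Complex.I * (Real.sin Δ : ℂ) * α‖ = |Real.sin Δ| * ‖α‖ := by
      rw [norm_mul, norm_mul, Complex.norm_I, Complex.norm_real, Real.norm_eq_abs, one_mul]
    have h3 : ((starRingEnd ℂ) α * ((Real.cos Δ : ℂ) * α)).re =
        Real.cos Δ * (‖α‖) ^ 2 := by
      have : (starRingEnd ℂ) α * ((Real.cos Δ : ℂ) * α) =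
          (Real.cos Δ : ℂ) * ((starRingEnd ℂ) α * α) := by ring
      rw [this, ← Complex.normSq_eq_conj_mul_self, ← Complex.ofReal_mul,
        Complex.ofReal_re, Complex.normSq_eq_norm_sq]
    rw [h1, h2, h3]
    have hpyth := Real.sin_sq_add_cos_sq Δ
    have ha : |Real.cos Δ| ^ 2 = Real.cos Δ ^ 2 := sq_abs _
    have hb : |Real.sin Δ| ^ 2 = Real.sin Δ ^ 2 := sq_abs _
    simp only [map_zero, mul_zero, zero_mul, map_zero, Complex.zero_re, norm_zero]
    nlinarith [sq_abs (Real.cos Δ), sq_abs (Real.sin Δ)]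
  refine ⟨heq, ?_⟩
  have hc : 0 < 1 - Real.cos Δ := by
    have := Real.cos_le_one Δ
    cases lt_or_eq_of_le this with
    | inl h => linarith
    | inr h => exact absurd h hΔ
  have hcomp : Filter.Tendsto (fun t : ℝ => Real.exp (-2 * t ^ 2 * (1 - Real.cos Δ)))
      Filter.atTop (nhds 0) := by
    apply Real.tendsto_exp_atBot.comp
    have h1 : Filter.Tendsto (fun t : ℝ => t ^ 2) Filter.atTop Filter.atTop :=
      Filter.tendsto_pow_atTop (by norm_num)
    have h2 : Filter.Tendsto (fun t : ℝ => -2 * (1 - Real.cos Δ) * t ^ 2)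
        Filter.atTop Filter.atBot := by
      exact Filter.Tendsto.const_mul_atTop_of_neg (by nlinarith : -2 * (1 - Real.cos Δ) < 0) h1
    exact h2.congr (fun t => by ring)
  have habs : Filter.Tendsto (fun z : ℂ => ‖z‖) (Filter.comap (fun z : ℂ => ‖z‖) Filter.atTop)
      Filter.atTop := Filter.tendsto_comap
  have := hcomp.comp habs
  refine this.congr fun α => ?_
  simp only [Function.comp]
  exact (heq α).symm
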